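/- arXiv:1911.02763 — 5 statements merged into one kernel-verified Lean document; each statement's English description precedes it below -/
import Mathlib

section
/- Let G be a finite group with |G| > 2. The prime coprime graph Θ(G) is Eulerian (i.e., it admits a closed trail traversing every edge exactly once) if and only if |G| is odd and every non-identity element of G has prime order. -/
open Classical

/-- The prime coprime graph of a (multiplicative) group: two distinct vertices are
adjacent iff the gcd of their orders is `1` or a prime. -/
def pcGraph (G : Type*) [Group G] : SimpleGraph G where
  Adj x y := x ≠ y ∧
    (Nat.gcd (orderOf x) (orderOf y) = 1 ∨ (Nat.gcd (orderOf x) (orderOf y)).Prime)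
  symm := by
    constructor
    rintro x y ⟨hxy, h⟩
    exact ⟨hxy.symm, by rwa [Nat.gcd_comm]⟩
  loopless := ⟨fun x h => h.1 rfl⟩

namespace PCAux

open SimpleGraph

variable {V : Type*}

/-- The "zig-zag" closed trail covering all edges incident to `a` or `b`. -/
def zig (a b v : V) (hab : a ≠ b) (hbv : b ≠ v) :
    (c : V) → c ≠ a → (pairs : List (V × V)) →
    (∀ p ∈ pairs, p.1 ≠ a ∧ p.1 ≠ b ∧ p.2 ≠ a ∧ p.2 ≠ b) → (⊤ : SimpleGraph V).Walk c v
  | c, hca, [], _ =>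
      .cons ((SimpleGraph.top_adj _ _).2 hca)
        (.cons ((SimpleGraph.top_adj _ _).2 hab) (.cons ((SimpleGraph.top_adj _ _).2 hbv) .nil))
  | c, hca, (x, y) :: rest, h =>
      .cons ((SimpleGraph.top_adj _ _).2 hca)
        (.cons ((SimpleGraph.top_adj _ _).2 (h (x, y) (List.mem_cons_self)).1.symm)
          (.cons ((SimpleGraph.top_adj _ _).2 (h (x, y) (List.mem_cons_self)).2.1)
            (.cons ((SimpleGraph.top_adj _ _).2 (h (x, y) (List.mem_cons_self)).2.2.2.symm)
              (zig a b v hab hbv y (h (x, y) (List.mem_cons_self)).2.2.1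
                rest (fun p hp => h p (List.mem_cons_of_mem _ hp))))))

lemma zig_count (a b v : V) (hab : a ≠ b) (hbv : b ≠ v) :
    ∀ (pairs : List (V × V)) (c : V) (hca : c ≠ a)
      (h : ∀ p ∈ pairs, p.1 ≠ a ∧ p.1 ≠ b ∧ p.2 ≠ a ∧ p.2 ≠ b) (e : Sym2 V),
      ((zig a b v hab hbv c hca pairs h).edges).count e =
      ((s(c,a) :: s(a,b) :: s(b,v) ::
        pairs.flatMap fun p => [s(a,p.1), s(b,p.1), s(a,p.2), s(b,p.2)]) : List (Sym2 V)).count e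
  | [], c, hca, h, e => by
      simp [zig, List.count_cons]
  | (x, y) :: rest, c, hca, h, e => by
      have ih := zig_count a b v hab hbv rest y (h (x, y) (List.mem_cons_self)).2.2.1
        (fun p hp => h p (List.mem_cons_of_mem _ hp)) e
      simp only [zig, SimpleGraph.Walk.edges_cons, List.flatMap_cons, List.count_cons,
        List.count_append, List.count_nil, ih]
      rw [show s(x,b) = s(b,x) from Sym2.eq_swap, show s(y,a) = s(a,y) from Sym2.eq_swap]
      ring

end PCAux

namespace PCAux

def pairup : List V → List (V × V)
  | [] => []
  | [_] => []
  | x :: y :: r => (x, y) :: pairup r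

lemma pairup_flatten : ∀ (l : List V), Even l.length →
    (pairup l).flatMap (fun p => [p.1, p.2]) = l
  | [], _ => rfl
  | [x], h => by simp at h
  | x :: y :: r, h => by
      have h' : Even r.length := by
        rcases h with ⟨k, hk⟩
        simp only [List.length_cons] at hk
        exact ⟨k - 1, by omega⟩
      simp [pairup, pairup_flatten r h']

lemma flatMap_pairs {β : Type*} (g : V → List β) (pairs : List (V × V)) :
    (pairs.flatMap fun p => g p.1 ++ g p.2) = (pairs.flatMap fun p => [p.1, p.2]).flatMap g := by
  induction pairs with
  | nil => rfl
  | cons p t ih => simp [ih]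

lemma count_flatMap {β : Type*} (g : V → List β) (e : β) (l : List V) :
    (l.flatMap g).count e = (l.map fun x => (g x).count e).sum := by
  induction l with
  | nil => rfl
  | cons x t ih => simp [List.count_append, ih]

lemma flat_count_of (l : List V) (g : V → List (Sym2 V)) (x₀ : V) (hnd : l.Nodup)
    (e : Sym2 V) (hpt : ∀ x, (g x).count e = if x = x₀ then 1 else 0) :
    (l.flatMap g).count e = if x₀ ∈ l then 1 else 0 := by
  induction l with
  | nil => simp
  | cons y t ih =>
    have hnd' := hnd.of_cons
    simp only [List.flatMap_cons, List.count_append, hpt y, ih hnd', List.mem_cons]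
    by_cases hy : y = x₀
    · subst hy
      have : y ∉ t := (List.nodup_cons.mp hnd).1
      simp [this]
    · simp [hy, Ne.symm hy]

lemma flat_count_zero (l : List V) (g : V → List (Sym2 V)) (e : Sym2 V)
    (hpt : ∀ x ∈ l, (g x).count e = 0) :
    (l.flatMap g).count e = 0 := by
  induction l with
  | nil => simp
  | cons y t ih =>
    simp only [List.flatMap_cons, List.count_append, hpt y (List.mem_cons_self),
      ih fun x hx => hpt x (List.mem_cons_of_mem _ hx)]

end PCAux

namespace PCAux

lemma cp_a (a b w : V) (hab : a ≠ b) (hwa : w ≠ a) (hwb : w ≠ b) (x : V) :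
    ([s(a,x), s(b,x)] : List (Sym2 V)).count s(a,w) = if x = w then 1 else 0 := by
  by_cases h : x = w
  · subst h
    simp [List.count_cons, Sym2.eq_iff, beq_iff_eq, hab, hab.symm, hwa, hwa.symm, hwb, hwb.symm]
  · simp [List.count_cons, Sym2.eq_iff, beq_iff_eq, h, hab, hab.symm, hwa, hwa.symm, hwb, hwb.symm]

lemma cp_b (a b w : V) (hab : a ≠ b) (hwa : w ≠ a) (hwb : w ≠ b) (x : V) :
    ([s(a,x), s(b,x)] : List (Sym2 V)).count s(b,w) = if x = w then 1 else 0 := by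
  by_cases h : x = w
  · subst h
    simp [List.count_cons, Sym2.eq_iff, beq_iff_eq, hab, hab.symm, hwa, hwa.symm, hwb, hwb.symm]
  · simp [List.count_cons, Sym2.eq_iff, beq_iff_eq, h, hab, hab.symm, hwa, hwa.symm, hwb, hwb.symm]

lemma cp_none (a b u w x : V) (hua : u ≠ a) (hub : u ≠ b) (hwa : w ≠ a) (hwb : w ≠ b) :
    ([s(a,x), s(b,x)] : List (Sym2 V)).count s(u,w) = 0 := by
  simp [List.count_cons, Sym2.eq_iff, beq_iff_eq, hua, hua.symm, hub, hub.symm, hwa, hwa.symm,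
    hwb, hwb.symm]

lemma count_T_zero (a b v u w : V) (l : List V)
    (hua : u ≠ a) (hub : u ≠ b) (hwa : w ≠ a) (hwb : w ≠ b) :
    ((s(v,a) :: s(a,b) :: s(b,v) :: l.flatMap fun x => [s(a,x), s(b,x)]) :
      List (Sym2 V)).count s(u,w) = 0 := by
  rw [List.count_cons, List.count_cons, List.count_cons,
    flat_count_zero l _ _ (fun x _ => cp_none a b u w x hua hub hwa hwb)]
  simp [Sym2.eq_iff, hua, hua.symm, hub, hub.symm, hwa, hwa.symm, hwb, hwb.symm]

lemma cp_ab (a b x : V) (hxa : x ≠ a) (hxb : x ≠ b) :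
    ([s(a,x), s(b,x)] : List (Sym2 V)).count s(a,b) = 0 := by
  simp [List.count_cons, Sym2.eq_iff, beq_iff_eq, hxa, hxa.symm, hxb, hxb.symm]

lemma count_T_one_a (a b v w : V) (hab : a ≠ b) (hva : v ≠ a) (hvb : v ≠ b)
    (l : List V) (hl : ∀ x ∈ l, x ≠ a ∧ x ≠ b ∧ x ≠ v) (hnd : l.Nodup)
    (hvl : v ∉ l)
    (hmem : ∀ x, x ≠ a → x ≠ b → x ≠ v → x ∈ l)
    (hwa : w ≠ a) :
    ((s(v,a) :: s(a,b) :: s(b,v) :: l.flatMap fun x => [s(a,x), s(b,x)]) :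
      List (Sym2 V)).count s(a,w) = 1 := by
  by_cases hwb : w = b
  · rw [show s(a,w) = s(a,b) by rw [hwb]]
    rw [List.count_cons, List.count_cons, List.count_cons,
      flat_count_zero l _ _ (fun x hx => cp_ab a b x (hl x hx).1 (hl x hx).2.1)]
    simp [Sym2.eq_iff, hab, hab.symm, hva, hva.symm, hvb, hvb.symm]
  · by_cases hwv : w = v
    · rw [show s(a,w) = s(a,v) by rw [hwv]]
      rw [List.count_cons, List.count_cons, List.count_cons,
        flat_count_of l _ v hnd _ (cp_a a b v hab hva hvb)]
      simp [Sym2.eq_iff, hab, hab.symm, hva, hva.symm, hvb, hvb.symm, hvl]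
    · rw [List.count_cons, List.count_cons, List.count_cons,
        flat_count_of l _ w hnd _ (cp_a a b w hab hwa hwb)]
      have hwl : w ∈ l := hmem w hwa hwb hwv
      simp [Sym2.eq_iff, hwl, hwa, Ne.symm hwa, hwb, Ne.symm hwb, hwv, Ne.symm hwv, hab,
        hab.symm, hva, hva.symm, hvb, hvb.symm]

lemma count_T_one_b (a b v w : V) (hab : a ≠ b) (hva : v ≠ a) (hvb : v ≠ b)
    (l : List V) (hl : ∀ x ∈ l, x ≠ a ∧ x ≠ b ∧ x ≠ v) (hnd : l.Nodup)
    (hvl : v ∉ l)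
    (hmem : ∀ x, x ≠ a → x ≠ b → x ≠ v → x ∈ l)
    (hwb : w ≠ b) :
    ((s(v,a) :: s(a,b) :: s(b,v) :: l.flatMap fun x => [s(a,x), s(b,x)]) :
      List (Sym2 V)).count s(b,w) = 1 := by
  by_cases hwa : w = a
  · rw [show s(b,w) = s(b,a) by rw [hwa], show s(b,a) = s(a,b) from Sym2.eq_swap]
    rw [List.count_cons, List.count_cons, List.count_cons,
      flat_count_zero l _ _ (fun x hx => cp_ab a b x (hl x hx).1 (hl x hx).2.1)]
    simp [Sym2.eq_iff, hab, hab.symm, hva, hva.symm, hvb, hvb.symm]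
  · by_cases hwv : w = v
    · rw [show s(b,w) = s(b,v) by rw [hwv]]
      rw [List.count_cons, List.count_cons, List.count_cons,
        flat_count_of l _ v hnd _ (cp_b a b v hab hva hvb)]
      simp [Sym2.eq_iff, hab, hab.symm, hva, hva.symm, hvb, hvb.symm, hvl]
    · rw [List.count_cons, List.count_cons, List.count_cons,
        flat_count_of l _ w hnd _ (cp_b a b w hab hwa hwb)]
      have hwl : w ∈ l := hmem w hwa hwb hwv
      simp [Sym2.eq_iff, hwl, hwa, Ne.symm hwa, hwb, Ne.symm hwb, hwv, Ne.symm hwv, hab,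
        hab.symm, hva, hva.symm, hvb, hvb.symm]

lemma count_T_one (a b v u w : V) (hab : a ≠ b) (hva : v ≠ a) (hvb : v ≠ b)
    (l : List V) (hl : ∀ x ∈ l, x ≠ a ∧ x ≠ b ∧ x ≠ v) (hnd : l.Nodup)
    (hvl : v ∉ l)
    (hmem : ∀ x, x ≠ a → x ≠ b → x ≠ v → x ∈ l)
    (huw : u ≠ w) (hcase : u = a ∨ u = b ∨ w = a ∨ w = b) :
    ((s(v,a) :: s(a,b) :: s(b,v) :: l.flatMap fun x => [s(a,x), s(b,x)]) :
      List (Sym2 V)).count s(u,w) = 1 := by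
  rcases hcase with h | h | h | h
  · rw [show s(u,w) = s(a,w) by rw [h]]
    exact count_T_one_a a b v w hab hva hvb l hl hnd hvl hmem (h ▸ huw.symm)
  · rw [show s(u,w) = s(b,w) by rw [h]]
    exact count_T_one_b a b v w hab hva hvb l hl hnd hvl hmem (h ▸ huw.symm)
  · rw [show s(u,w) = s(a,u) by rw [h, Sym2.eq_swap]]
    exact count_T_one_a a b v u hab hva hvb l hl hnd hvl hmem (h ▸ huw)
  · rw [show s(u,w) = s(b,u) by rw [h, Sym2.eq_swap]]
    exact count_T_one_b a b v u hab hva hvb l hl hnd hvl hmem (h ▸ huw)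

end PCAux

namespace PCAux

/-- The inclusion homomorphism between complete graphs. -/
def incl (P : V → Prop) : (⊤ : SimpleGraph {x : V // P x}) →g (⊤ : SimpleGraph V) :=
  ⟨Subtype.val, fun {x y} h => by
    rw [SimpleGraph.top_adj] at h ⊢
    exact fun hh => h (Subtype.val_injective hh)⟩

@[simp] lemma incl_apply (P : V → Prop) (x : {x : V // P x}) : incl P x = x.val := rfl

theorem exists_eulerian_top : ∀ (n : ℕ) (V : Type u) [Fintype V] (v : V),
    Fintype.card V = n → Odd n →
    ∃ p : (⊤ : SimpleGraph V).Walk v v, p.IsEulerian := by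
  intro n
  induction n using Nat.strong_induction_on with
  | _ n ih =>
    intro V _ v hcard hodd
    by_cases h1 : n = 1
    · subst h1
      refine ⟨.nil, fun e he => ?_⟩
      exfalso
      induction e using Sym2.ind with
      | _ u w =>
        rw [SimpleGraph.mem_edgeSet, SimpleGraph.top_adj] at he
        exact he (Fintype.card_le_one_iff.mp (by omega) u w)
    · have h3 : 3 ≤ n := by rcases hodd with ⟨k, hk⟩; omega
      have hcard3 : 3 ≤ Fintype.card V := hcard ▸ h3
      obtain ⟨a, ha, b, hb, hab⟩ := Finset.one_lt_card.mp
        (show 1 < (Finset.univ.erase v).card by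
          rw [Finset.card_erase_of_mem (Finset.mem_univ v), Finset.card_univ]; omega)
      have hav : a ≠ v := Finset.ne_of_mem_erase ha
      have hbv : b ≠ v := Finset.ne_of_mem_erase hb
      have hV'card : Fintype.card {x : V // x ≠ a ∧ x ≠ b} = n - 2 := by
        rw [Fintype.card_subtype]
        have h2 : Finset.univ.filter (fun x : V => x ≠ a ∧ x ≠ b) = Finset.univ \ {a, b} := by
          ext x; simp [not_or]
        rw [h2, Finset.card_sdiff_of_subset (Finset.subset_univ _), Finset.card_univ, hcard,
          Finset.card_insert_of_notMem (by simpa using hab), Finset.card_singleton]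
      have hodd' : Odd (n - 2) := by rcases hodd with ⟨k, hk⟩; exact ⟨k - 1, by omega⟩
      obtain ⟨p', hp'⟩ := ih (n - 2) (by omega) {x : V // x ≠ a ∧ x ≠ b}
        ⟨v, Ne.symm hav, Ne.symm hbv⟩ hV'card hodd'
      set φ := incl (fun x : V => x ≠ a ∧ x ≠ b) with hφ
      set q := p'.map φ with hq
      set s : Finset V := Finset.univ \ {a, b, v} with hs
      set l := s.toList with hldef
      have hl : ∀ x ∈ l, x ≠ a ∧ x ≠ b ∧ x ≠ v := by
        intro x hx
        have := Finset.mem_toList.mp hx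
        simp only [hs, Finset.mem_sdiff, Finset.mem_univ, Finset.mem_insert,
          Finset.mem_singleton, true_and, not_or] at this
        exact this
      have hlmem : ∀ x, x ≠ a → x ≠ b → x ≠ v → x ∈ l := by
        intro x hxa hxb hxv
        refine Finset.mem_toList.mpr ?_
        simp [hs, hxa, hxb, hxv]
      have hvl : v ∉ l := fun h => (hl v h).2.2 rfl
      have hlnd : l.Nodup := Finset.nodup_toList s
      have hslen : Even l.length := by
        rw [hldef, Finset.length_toList]
        have hcs : s.card = n - 3 := by
          rw [hs, Finset.card_sdiff_of_subset (Finset.subset_univ _), Finset.card_univ, hcard]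
          congr 1
          rw [Finset.card_insert_of_notMem (by simp [hab, hav]),
            Finset.card_insert_of_notMem (by simp [hbv]), Finset.card_singleton]
        rcases hodd with ⟨k, hk⟩
        rw [hcs]
        exact ⟨k - 1, by omega⟩
      set pairs := pairup l with hpdef
      have hflat : pairs.flatMap (fun p => [p.1, p.2]) = l := pairup_flatten l hslen
      have hpairs : ∀ p ∈ pairs, p.1 ≠ a ∧ p.1 ≠ b ∧ p.2 ≠ a ∧ p.2 ≠ b := by
        intro p hp
        have h1 : p.1 ∈ l := by
          rw [← hflat]; exact List.mem_flatMap.mpr ⟨p, hp, by simp⟩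
        have h2 : p.2 ∈ l := by
          rw [← hflat]; exact List.mem_flatMap.mpr ⟨p, hp, by simp⟩
        exact ⟨(hl _ h1).1, (hl _ h1).2.1, (hl _ h2).1, (hl _ h2).2.1⟩
      refine ⟨q.append (zig a b v hab hbv v (Ne.symm hav) pairs hpairs), ?_⟩
      intro e he
      induction e using Sym2.ind with
      | _ u w =>
        rw [SimpleGraph.mem_edgeSet, SimpleGraph.top_adj] at he
        refine (congrArg (List.count s(u,w)) (SimpleGraph.Walk.edges_append q (zig a b v hab hbv v (Ne.symm hav) pairs hpairs))).trans ?_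
        rw [List.count_append]
        refine (congrArg (fun t => List.count s(u,w) q.edges + t)
          (zig_count a b v hab hbv pairs v (Ne.symm hav) hpairs s(u,w))).trans ?_
        beta_reduce
        have hconv : (pairs.flatMap fun p => [s(a,p.1), s(b,p.1), s(a,p.2), s(b,p.2)])
            = l.flatMap (fun x => [s(a,x), s(b,x)]) := by
          exact (flatMap_pairs (fun x => [s(a,x), s(b,x)]) pairs).trans (by rw [hflat])
        rw [hconv]
        by_cases hcase : u = a ∨ u = b ∨ w = a ∨ w = b
        · have hqc : q.edges.count s(u,w) = 0 := by
            rw [List.count_eq_zero]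
            intro hmem'
            rw [hq, SimpleGraph.Walk.edges_map] at hmem'
            obtain ⟨e', he', heq⟩ := List.mem_map.mp hmem'
            induction e' using Sym2.ind with
            | _ x y =>
              rw [Sym2.map_pair_eq, Sym2.eq_iff] at heq
              obtain ⟨hxa, hxb⟩ := x.2
              obtain ⟨hya, hyb⟩ := y.2
              simp only [hφ, incl_apply] at heq
              rcases heq with ⟨h1, h2⟩ | ⟨h1, h2⟩ <;>
                rcases hcase with h | h | h | h <;>
                first
                  | exact hxa (h1.trans h)
                  | exact hxb (h1.trans h)
                  | exact hya (h2.trans h)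
                  | exact hyb (h2.trans h)
          rw [hqc,
            count_T_one a b v u w hab (Ne.symm hav) (Ne.symm hbv) l hl hlnd hvl hlmem he hcase]
        · push_neg at hcase
          obtain ⟨hua, hub, hwa, hwb⟩ := hcase
          have hqc : q.edges.count s(u,w) = 1 := by
            rw [hq, SimpleGraph.Walk.edges_map]
            have : s(u,w) = Sym2.map φ s((⟨u, hua, hub⟩ : {x : V // x ≠ a ∧ x ≠ b}),
                (⟨w, hwa, hwb⟩ : {x : V // x ≠ a ∧ x ≠ b})) := by
              rw [Sym2.map_pair_eq, hφ, incl_apply, incl_apply]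
            rw [this, List.count_map_of_injective _ _
              (Sym2.map.injective (by rw [hφ]; exact fun x y hxy => Subtype.val_injective hxy))]
            have h1 := hp' s((⟨u, hua, hub⟩ : {x : V // x ≠ a ∧ x ≠ b}),
                (⟨w, hwa, hwb⟩ : {x : V // x ≠ a ∧ x ≠ b})) (by
              rw [SimpleGraph.mem_edgeSet, SimpleGraph.top_adj]
              intro hh
              exact he (Subtype.mk_eq_mk.mp hh))
            convert h1 using 3
          rw [hqc, count_T_zero a b v u w l hua hub hwa hwb]

end PCAux

/-- For a finite group G with |G| > 2, the prime coprime graph Θ(G) is Eulerian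
iff |G| is odd and every non-identity element of G has prime order. -/
theorem pcGraph_eulerian_iff (G : Type*) [Group G] [Finite G] (hG : 2 < Nat.card G) :
    (∃ (v : G) (p : (pcGraph G).Walk v v), p.IsEulerian) ↔
      (Odd (Nat.card G) ∧ ∀ x : G, x ≠ 1 → (orderOf x).Prime) := by
  letI : Fintype G := Fintype.ofFinite G
  rw [Nat.card_eq_fintype_card] at hG ⊢
  have hAdj : ∀ x y : G, (pcGraph G).Adj x y ↔ (x ≠ y ∧
      (Nat.gcd (orderOf x) (orderOf y) = 1 ∨ (Nat.gcd (orderOf x) (orderOf y)).Prime)) :=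
    fun _ _ => Iff.rfl
  constructor
  · rintro ⟨v, p, hp⟩
    have hdeg : ∀ x : G, Even ((pcGraph G).degree x) := fun x =>
      (hp.even_degree_iff).mpr fun h => absurd rfl h
    have hdeg1 : (pcGraph G).degree 1 = Fintype.card G - 1 := by
      rw [SimpleGraph.degree]
      have hnf : (pcGraph G).neighborFinset 1 = Finset.univ.erase 1 := by
        ext y
        simp [SimpleGraph.mem_neighborFinset, hAdj, Finset.mem_erase, eq_comm,
          Nat.gcd_one_left]
      rw [hnf, Finset.card_erase_of_mem (Finset.mem_univ _), Finset.card_univ]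
    have hodd : Odd (Fintype.card G) := by
      have h := hdeg 1
      rw [hdeg1] at h
      rcases h with ⟨k, hk⟩
      exact ⟨k, by omega⟩
    refine ⟨hodd, ?_⟩
    intro x hx1
    by_contra hnp
    have hn1 : orderOf x ≠ 1 := fun h => hx1 (orderOf_eq_one_iff.mp h)
    set P : G → Prop := fun y => Nat.gcd (orderOf x) (orderOf y) = 1 ∨
      (Nat.gcd (orderOf x) (orderOf y)).Prime with hP
    have hPx : ¬ P x := by
      rw [hP]
      simp only [Nat.gcd_self]
      rintro (h | h)
      · exact hn1 h
      · exact hnp h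
    have hnb : (pcGraph G).neighborFinset x = Finset.univ.filter P := by
      ext y
      simp only [SimpleGraph.mem_neighborFinset, Finset.mem_filter, Finset.mem_univ, true_and]
      rw [hAdj]
      constructor
      · exact fun h => h.2
      · exact fun h => ⟨fun he => hPx (he ▸ h), h⟩
    have h1P : (1 : G) ∈ Finset.univ.filter P := by
      simp only [Finset.mem_filter, Finset.mem_univ, true_and, hP, orderOf_one,
        Nat.gcd_one_right]
      trivial
    have hinv : ∀ y : G, y ∈ (Finset.univ.filter P).erase 1 → y⁻¹ ≠ y := by
      intro y hy hyy
      have hy1 : y ≠ 1 := (Finset.mem_erase.mp hy).1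
      have hsq : y ^ 2 = 1 := by
        rw [pow_two]
        exact mul_eq_one_iff_inv_eq.mpr hyy
      have h2 : orderOf y ∣ 2 := orderOf_dvd_of_pow_eq_one hsq
      rcases (Nat.dvd_prime Nat.prime_two).mp h2 with h | h
      · exact hy1 (orderOf_eq_one_iff.mp h)
      · have h3 : (2 : ℕ) ∣ Fintype.card G := h ▸ orderOf_dvd_card
        rw [← Nat.not_even_iff_odd] at hodd
        exact hodd (even_iff_two_dvd.mpr h3)
    have hmem : ∀ y : G, y ∈ (Finset.univ.filter P).erase 1 →
        y⁻¹ ∈ (Finset.univ.filter P).erase 1 := by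
      intro y hy
      rw [Finset.mem_erase, Finset.mem_filter] at hy ⊢
      refine ⟨fun h => hy.1 (inv_eq_one.mp h), Finset.mem_univ _, ?_⟩
      simpa only [hP, orderOf_inv] using hy.2.2
    have heven : Even ((Finset.univ.filter P).erase 1).card := by
      have hz : ∑ _y ∈ (Finset.univ.filter P).erase 1, (1 : ZMod 2) = 0 :=
        Finset.sum_involution (fun y _ => y⁻¹)
          (fun y hy => by decide)
          (fun y hy _ => hinv y hy)
          (fun y hy => hmem y hy)
          (fun y hy => inv_inv y)
      rw [Finset.sum_const, nsmul_eq_mul, mul_one] at hz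
      exact even_iff_two_dvd.mpr ((ZMod.natCast_eq_zero_iff _ 2).mp hz)
    have hdx : (pcGraph G).degree x = ((Finset.univ.filter P).erase 1).card + 1 := by
      rw [SimpleGraph.degree, hnb, ← Finset.card_erase_add_one h1P]
    have := hdeg x
    rw [hdx, Nat.even_add_one] at this
    exact this heven
  · rintro ⟨hodd, hprime⟩
    have hEq : pcGraph G = ⊤ := by
      ext x y
      rw [hAdj, SimpleGraph.top_adj]
      constructor
      · exact fun h => h.1
      · intro hxy
        refine ⟨hxy, ?_⟩
        by_cases hx : x = 1
        · left; rw [hx, orderOf_one, Nat.gcd_one_left]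
        by_cases hy : y = 1
        · left; rw [hy, orderOf_one, Nat.gcd_one_right]
        · have hpx := hprime x hx
          have hpy := hprime y hy
          by_cases h : orderOf x = orderOf y
          · right; rw [h, Nat.gcd_self]; exact hpy
          · left; exact (Nat.coprime_primes hpx hpy).mpr h
    rw [hEq]
    exact ⟨1, PCAux.exists_eulerian_top (Fintype.card G) G 1 rfl hodd⟩
end

section
/- Let n ≥ 2 be a natural number and let D_n denote the dihedral group of order 2n. The prime coprime graph Θ(D_n) is a complete graph if and only if n is a prime number. -/
lemma order_mem_dihedral (n : ℕ) (hp : n.Prime) (x : DihedralGroup n) :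
    orderOf x = 1 ∨ (orderOf x).Prime ∧ (orderOf x = 2 ∨ orderOf x = n) := by
  haveI : NeZero n := ⟨hp.pos.ne'⟩
  cases x with
  | r i =>
    rw [DihedralGroup.orderOf_r]
    have hd : Nat.gcd n i.val ∣ n := Nat.gcd_dvd_left _ _
    rcases (Nat.Prime.eq_one_or_self_of_dvd hp _ hd) with h1 | h1
    · right
      rw [h1, Nat.div_one]
      exact ⟨hp, Or.inr rfl⟩
    · left
      rw [h1, Nat.div_self hp.pos]
  | sr i =>
    rw [DihedralGroup.orderOf_sr]
    exact Or.inr ⟨Nat.prime_two, Or.inl rfl⟩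

/-- For n ≥ 2, the prime coprime graph of the dihedral group of order 2n is complete
iff n is prime. -/
theorem pcGraph_dihedral_complete_iff (n : ℕ) (hn : 2 ≤ n) :
    pcGraph (DihedralGroup n) = ⊤ ↔ n.Prime := by
  haveI : NeZero n := ⟨by omega⟩
  constructor
  · intro h
    by_contra hnp
    have hn2 : n ≠ 2 := fun h2 => hnp (h2 ▸ Nat.prime_two)
    have hne : (DihedralGroup.r 1 : DihedralGroup n) ≠ DihedralGroup.r (-1) := by
      intro heq
      have h1 : (1 : ZMod n) = -1 := by injection heq
      have : ((2 : ℕ) : ZMod n) = 0 := by push_cast; linear_combination h1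
      have := (ZMod.natCast_eq_zero_iff 2 n).mp this
      have := Nat.le_of_dvd (by norm_num) this
      omega
    have hadj : (pcGraph (DihedralGroup n)).Adj (DihedralGroup.r 1) (DihedralGroup.r (-1)) := by
      rw [h]; exact hne
    obtain ⟨-, hgcd⟩ := hadj
    have ho1 : orderOf (DihedralGroup.r 1 : DihedralGroup n) = n := DihedralGroup.orderOf_r_one
    have ho2 : orderOf (DihedralGroup.r (-1) : DihedralGroup n) = n := by
      have : (DihedralGroup.r (-1) : DihedralGroup n) = (DihedralGroup.r 1)⁻¹ := rfl
      rw [this, orderOf_inv, ho1]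
    rw [ho1, ho2, Nat.gcd_self] at hgcd
    rcases hgcd with h1 | h1
    · omega
    · exact hnp h1
  · intro hp
    ext x y
    simp only [SimpleGraph.top_adj, pcGraph]
    constructor
    · exact fun h => h.1
    · intro hne
      refine ⟨hne, ?_⟩
      rcases order_mem_dihedral n hp x with hx | ⟨hxp, -⟩
      · left; rw [hx]; exact Nat.gcd_one_left _
      rcases order_mem_dihedral n hp y with hy | ⟨hyp, -⟩
      · left; rw [hy]; exact Nat.gcd_one_right _
      by_cases hxy : orderOf x = orderOf y
      · right; rw [hxy, Nat.gcd_self]; exact hyp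
      · left; exact (Nat.coprime_primes hxp hyp).mpr hxy
end

section
/- Let p and q be distinct primes with p < q. The prime coprime graph Θ(ℤ_{pq}) of the cyclic group of order pq is Hamiltonian if and only if p = 2. -/
open SimpleGraph List

section Aux

private lemma chain_countP_le {α : Type*} {R : α → α → Prop} {p q : α → Bool}
    (h : ∀ a b, R a b → p a → q b) :
    ∀ l : List α, l.Chain' R → l.dropLast.countP p ≤ l.tail.countP q := by
  intro l
  induction l with
  | nil => simp
  | cons a l ih =>
    intro hc
    cases l with
    | nil => simp
    | cons b l =>
      rw [List.Chain', List.isChain_cons_cons] at hc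
      have hber := ih hc.2
      rw [List.dropLast_cons₂, List.countP_cons, List.tail_cons]
      have : (b :: l).countP q = l.countP q + (if q b then 1 else 0) := by
        rw [List.countP_cons]
      rw [this]
      have h1 : (b :: l).dropLast.countP p ≤ (b :: l).tail.countP q := hber
      simp only [List.tail_cons] at h1
      have h2 : (if p a then 1 else 0) ≤ (if q b then 1 else 0) := by
        by_cases hpa : p a
        · simp [hpa, h a b hc.1 hpa]
        · simp [hpa]
      omega

private lemma countP_eq_card_filter {α : Type*} [Fintype α] [DecidableEq α] (m : List α)
    (hm : ∀ a, m.count a = 1) (p : α → Bool) :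
    m.countP p = (Finset.univ.filter (fun a => p a)).card := by
  have hnd : m.Nodup := List.nodup_iff_count_le_one.2 fun a => (hm a).le
  have hmem : ∀ a : α, a ∈ m := fun a => List.count_pos_iff.1 (by rw [hm a]; norm_num)
  rw [List.countP_eq_length_filter]
  have hnd2 : (m.filter p).Nodup := hnd.filter p
  rw [← List.toFinset_card_of_nodup hnd2]
  congr 1
  ext a
  simp [List.mem_filter, hmem a]

/-- In a Hamiltonian graph, any independent set has at most as many elements as its complement. -/
private lemma card_le_compl_of_indep {α : Type*} [Fintype α] [DecidableEq α]
    {G : SimpleGraph α} (hG : G.IsHamiltonian) (hcard : Fintype.card α ≠ 1)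
    (S : Finset α) (hS : ∀ x ∈ S, ∀ y ∈ S, ¬ G.Adj x y) :
    S.card ≤ Sᶜ.card := by
  obtain ⟨v, w, hw⟩ := hG hcard
  have hchain : List.Chain' G.Adj w.support := w.isChain_adj_support
  have htail : ∀ a, w.support.tail.count a = 1 :=
    (Walk.isHamiltonianCycle_iff_isCycle_and_support_count_tail_eq_one.1 hw).2
  -- dropLast also has each element exactly once
  have hne : w.support.tail ≠ [] := by
    intro h
    have := htail v
    rw [h] at this
    simp at this
  obtain ⟨b, t, hbt⟩ := List.exists_cons_of_ne_nil hne
  have hsupp : w.support = v :: b :: t := by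
    rw [Walk.support_eq_cons, hbt]
  have h1 : w.support.getLast? = some v := by
    rw [List.getLast?_eq_getLast w.support_ne_nil]
    exact congrArg some (w.getLast_support)
  have h2 : (b :: t).getLast (List.cons_ne_nil b t) = v := by
    rw [hsupp, List.getLast?_cons_cons, List.getLast?_eq_getLast (List.cons_ne_nil b t)] at h1
    exact Option.some.inj h1
  have hsplit : b :: t = (b :: t).dropLast ++ [v] := by
    conv_lhs => rw [← List.dropLast_append_getLast (List.cons_ne_nil b t), h2]
  have hdl : ∀ a, w.support.dropLast.count a = 1 := by
    intro a
    have hdrop : w.support.dropLast = v :: (b :: t).dropLast := by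
      rw [hsupp, List.dropLast_cons₂]
    have hta := htail a
    rw [hbt] at hta
    rw [hsplit, List.count_append] at hta
    rw [hdrop, List.count_cons]
    simp only [List.count_singleton] at hta ⊢
    omega
  have htail' : ∀ a, w.support.tail.count a = 1 := htail
  classical
  have key := chain_countP_le (p := fun a => decide (a ∈ S)) (q := fun a => decide (a ∉ S))
    (fun a b hab ha => by
      simp only [decide_eq_true_eq] at *
      exact fun hb => hS a ha b hb hab) w.support hchain
  rw [countP_eq_card_filter _ hdl, countP_eq_card_filter _ htail] at key
  have : Finset.univ.filter (fun a => a ∉ S) = Sᶜ := by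
    ext a; simp
  simpa [this] using key

private def descWalk {n : ℕ} [NeZero n] {G : SimpleGraph (ZMod n)}
    (h : ∀ x : ZMod n, G.Adj x (x + 1)) : (k : ℕ) → G.Walk (k : ZMod n) 0
  | 0 => (Walk.nil : G.Walk 0 0).copy (by norm_cast) rfl
  | k + 1 => Walk.cons (by
      have := (h (k : ZMod n)).symm
      rwa [show ((k : ℕ) : ZMod n) + 1 = ((k + 1 : ℕ) : ZMod n) by push_cast; ring] at this)
      (descWalk h k)

private lemma descWalk_support {n : ℕ} [NeZero n] {G : SimpleGraph (ZMod n)}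
    (h : ∀ x : ZMod n, G.Adj x (x + 1)) (k : ℕ) :
    (descWalk h k).support = ((List.range (k + 1)).reverse.map (Nat.cast : ℕ → ZMod n)) := by
  induction k with
  | zero =>
    rw [show List.range 1 = [0] from rfl]
    simp [descWalk]
  | succ k ih =>
    rw [descWalk, Walk.support_cons, ih,
      show List.range (k + 1 + 1) = List.range (k + 1) ++ [k + 1] from List.range_succ]
    simp

private lemma descWalk_edges {n : ℕ} [NeZero n] {G : SimpleGraph (ZMod n)}
    (h : ∀ x : ZMod n, G.Adj x (x + 1)) (k : ℕ) :
    ∀ e ∈ (descWalk h k).edges, ∃ i < k, e = s(((i + 1 : ℕ) : ZMod n), ((i : ℕ) : ZMod n)) := by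
  induction k with
  | zero => simp [descWalk]
  | succ k ih =>
    intro e he
    rw [descWalk, Walk.edges_cons] at he
    rcases List.mem_cons.1 he with rfl | he
    · exact ⟨k, Nat.lt_succ_self k, rfl⟩
    · obtain ⟨i, hi, rfl⟩ := ih e he
      exact ⟨i, hi.trans (Nat.lt_succ_self k), rfl⟩

private lemma natCast_injOn_range {n : ℕ} [NeZero n] :
    ∀ i < n, ∀ j < n, ((i : ℕ) : ZMod n) = j → i = j := by
  intro i hi j hj hij
  have := congrArg ZMod.val hij
  rwa [ZMod.val_cast_of_lt hi, ZMod.val_cast_of_lt hj] at this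

private lemma hamiltonian_of_adj_succ {n : ℕ} [NeZero n] (hn : 3 ≤ n)
    {G : SimpleGraph (ZMod n)} (h : ∀ x : ZMod n, G.Adj x (x + 1)) :
    G.IsHamiltonian := by
  intro _
  have hn0 : n - 1 + 1 = n := by omega
  have hadj : G.Adj (0 : ZMod n) ((n - 1 : ℕ) : ZMod n) := by
    have := (h ((n - 1 : ℕ) : ZMod n)).symm
    rwa [show ((n - 1 : ℕ) : ZMod n) + 1 = 0 by
      rw [show ((n - 1 : ℕ) : ZMod n) + 1 = ((n - 1 + 1 : ℕ) : ZMod n) by push_cast; ring, hn0,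
        ZMod.natCast_self]] at this
  refine ⟨0, Walk.cons hadj (descWalk h (n - 1)), ?_⟩
  have hsupp := descWalk_support h (n - 1)
  rw [hn0] at hsupp
  have hnodup : ((List.range n).reverse.map (Nat.cast : ℕ → ZMod n)).Nodup := by
    refine List.Nodup.map_on ?_ (List.nodup_reverse.2 List.nodup_range)
    intro i hi j hj hij
    simp only [List.mem_reverse, List.mem_range] at hi hj
    exact natCast_injOn_range i hi j hj hij
  rw [Walk.isHamiltonianCycle_iff_isCycle_and_support_count_tail_eq_one]
  constructor
  · rw [Walk.cons_isCycle_iff]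
    constructor
    · exact Walk.IsPath.mk' (by rw [hsupp]; exact hnodup)
    · intro hmem
      obtain ⟨i, hi, hie⟩ := descWalk_edges h (n - 1) _ hmem
      rw [Sym2.eq_iff] at hie
      rcases hie with ⟨h1, h2⟩ | ⟨h1, h2⟩
      · have hdvd : n ∣ i + 1 := (ZMod.natCast_eq_zero_iff (i + 1) n).1 h1.symm
        have := Nat.le_of_dvd (Nat.succ_pos i) hdvd
        omega
      · have hdvd : n ∣ i := (ZMod.natCast_eq_zero_iff i n).1 h1.symm
        have hi0 : i = 0 := Nat.eq_zero_of_dvd_of_lt hdvd (by omega)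
        subst hi0
        have : n - 1 = 0 + 1 :=
          natCast_injOn_range (n - 1) (by omega) (0 + 1) (by omega) h2
        omega
  · intro a
    rw [Walk.support_cons, List.tail_cons, hsupp]
    have hmem : a ∈ (List.range n).reverse.map (Nat.cast : ℕ → ZMod n) := by
      refine List.mem_map.2 ⟨a.val, ?_, ZMod.natCast_zmod_val a⟩
      simp [ZMod.val_lt a]
    exact List.count_eq_one_of_mem hnodup hmem

private lemma card_order_eq_totient (n : ℕ) [NeZero n] :
    (Finset.univ.filter (fun x : ZMod n => addOrderOf x = n)).card = Nat.totient n := by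
  have hn0 : n ≠ 0 := NeZero.ne n
  rw [Nat.totient]
  refine Finset.card_bij' (fun x _ => x.val) (fun v _ => (v : ZMod n)) ?_ ?_ ?_ ?_
  · intro x hx
    simp only [Finset.mem_filter, Finset.mem_univ, true_and] at hx ⊢
    refine ⟨Finset.mem_range.2 x.val_lt, ?_⟩
    have h1 : addOrderOf x = n / n.gcd x.val := by
      rw [← ZMod.natCast_zmod_val x, ZMod.addOrderOf_coe _ hn0, ZMod.natCast_zmod_val x]
    rw [h1] at hx
    have hg : n.gcd x.val ∣ n := Nat.gcd_dvd_left _ _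
    have : n.gcd x.val = 1 := by
      rcases (Nat.div_eq_self.1 hx) with h | h
      · exact absurd h hn0
      · exact h
    exact this
  · intro v hv
    simp only [Finset.mem_filter, Finset.mem_range, Finset.mem_univ, true_and] at hv ⊢
    rw [ZMod.addOrderOf_coe _ hn0, hv.2, Nat.div_one]
  · intro x _
    exact ZMod.natCast_zmod_val x
  · intro v hv
    simp only [Finset.mem_filter, Finset.mem_range] at hv
    exact ZMod.val_cast_of_lt hv.1

-- even naturals have additive order dividing q in ZMod (2*q)
private lemma order_dvd_of_even {q : ℕ} [NeZero (2 * q)] (v : ℕ) (hv : Even v) :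
    addOrderOf ((v : ℕ) : ZMod (2 * q)) ∣ q := by
  rw [addOrderOf_dvd_iff_nsmul_eq_zero]
  obtain ⟨m, rfl⟩ := hv
  have : (q • ((m + m : ℕ) : ZMod (2 * q))) = (((2 * q) * m : ℕ) : ZMod (2 * q)) := by
    push_cast
    ring
  rw [this, ZMod.natCast_eq_zero_iff]
  exact Dvd.intro m rfl
end Aux

/-- The prime coprime graph of an additive group: two distinct vertices are
adjacent iff the gcd of their (additive) orders is `1` or a prime. -/
def pcGraphAdd (G : Type*) [AddGroup G] : SimpleGraph G where
  Adj x y := x ≠ y ∧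
    (Nat.gcd (addOrderOf x) (addOrderOf y) = 1 ∨ (Nat.gcd (addOrderOf x) (addOrderOf y)).Prime)
  symm := by
    constructor
    rintro x y ⟨hxy, h⟩
    exact ⟨hxy.symm, by rwa [Nat.gcd_comm]⟩
  loopless := ⟨fun x h => h.1 rfl⟩

/-- For distinct primes p < q, the prime coprime graph of ℤ/pqℤ is Hamiltonian iff p = 2. -/
theorem pcGraph_zmod_pq_hamiltonian_iff (p q : ℕ) (hp : p.Prime) (hq : q.Prime)
    (hpq : p < q) :
    haveI : NeZero (p * q) := ⟨Nat.mul_ne_zero hp.pos.ne' hq.pos.ne'⟩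
    (pcGraphAdd (ZMod (p * q))).IsHamiltonian ↔ p = 2 := by
  haveI : NeZero (p * q) := ⟨Nat.mul_ne_zero hp.pos.ne' hq.pos.ne'⟩
  constructor
  · -- Hamiltonian → p = 2
    intro hham
    by_contra hp2
    have hp3 : 3 ≤ p := by
      have := hp.two_le
      omega
    have hq5 : 5 ≤ q := by
      have hq4 : q ≠ 4 := by
        intro h
        rw [h] at hq
        norm_num at hq
      omega
    set S : Finset (ZMod (p * q)) :=
      Finset.univ.filter (fun x : ZMod (p * q) => addOrderOf x = p * q) with hSdef
    have hindep : ∀ x ∈ S, ∀ y ∈ S, ¬ (pcGraphAdd (ZMod (p * q))).Adj x y := by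
      intro x hx y hy hadj
      simp only [hSdef, Finset.mem_filter, Finset.mem_univ, true_and] at hx hy
      obtain ⟨-, hor⟩ := (show x ≠ y ∧ _ from hadj)
      rw [hx, hy, Nat.gcd_self] at hor
      rcases hor with h | h
      · have := hp.two_le; have := hq.two_le
        nlinarith
      · rw [Nat.prime_mul_iff] at h
        rcases h with ⟨-, h1⟩ | ⟨-, h1⟩
        · exact hq.one_lt.ne' h1
        · exact hp.one_lt.ne' h1
    have hcard1 : Fintype.card (ZMod (p * q)) = p * q := ZMod.card _
    have hne1 : Fintype.card (ZMod (p * q)) ≠ 1 := by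
      rw [hcard1]
      nlinarith
    have hkey : S.card ≤ Sᶜ.card := card_le_compl_of_indep hham hne1 S hindep
    have hcards : S.card + Sᶜ.card = p * q := by
      rw [Finset.card_add_card_compl, hcard1]
    have hScard : S.card = (p - 1) * (q - 1) := by
      rw [hSdef, card_order_eq_totient (p * q),
        Nat.totient_mul ((Nat.coprime_primes hp hq).2 (by omega)),
        Nat.totient_prime hp, Nat.totient_prime hq]
    obtain ⟨a, rfl⟩ : ∃ a, p = a + 3 := ⟨p - 3, by omega⟩
    obtain ⟨b, rfl⟩ : ∃ b, q = b + 5 := ⟨q - 5, by omega⟩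
    have e1 : a + 3 - 1 = a + 2 := by omega
    have e2 : b + 5 - 1 = b + 4 := by omega
    rw [e1, e2] at hScard
    rw [hScard] at hkey hcards
    nlinarith
  · -- p = 2 → Hamiltonian
    intro hp2
    subst hp2
    have hq3 : 3 ≤ q := by
      have := hq.two_le
      omega
    haveI : Fact (1 < 2 * q) := ⟨by omega⟩
    refine hamiltonian_of_adj_succ (by omega) ?_
    intro x
    refine (show x ≠ x + 1 ∧ _ from ⟨?_, ?_⟩)
    · intro h
      have h1 : (1 : ZMod (2 * q)) = 0 := by
        have := left_eq_add.1 h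
        simp at this
      exact one_ne_zero h1
    · have hdvd : Nat.gcd (addOrderOf x) (addOrderOf (x + 1)) ∣ q := by
        rcases Nat.even_or_odd x.val with hev | hodd
        · have h1 : addOrderOf x ∣ q := by
            have := order_dvd_of_even (q := q) x.val hev
            rwa [ZMod.natCast_zmod_val x] at this
          exact (Nat.gcd_dvd_left _ _).trans h1
        · have h1 : addOrderOf (x + 1) ∣ q := by
            have hx1 : ((x.val + 1 : ℕ) : ZMod (2 * q)) = x + 1 := by
              push_cast
              rw [ZMod.natCast_zmod_val x]
            have := order_dvd_of_even (q := q) (x.val + 1) (by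
              rcases hodd with ⟨m, hm⟩
              exact ⟨m + 1, by omega⟩)
            rwa [hx1] at this
          exact (Nat.gcd_dvd_right _ _).trans h1
      rcases (Nat.Prime.eq_one_or_self_of_dvd hq _ hdvd) with h | h
      · exact Or.inl h
      · exact Or.inr (by rw [h]; exact hq)
end

section
/- Let p and q be distinct primes, set n = pq and φ = (p−1)(q−1) (the Euler totient of n). The characteristic polynomial of the signless Laplacian matrix Q of the prime coprime graph Θ(D_n) of the dihedral group D_n of order 2n, viewed as a real matrix, equals (X − (2n−2))^{2n−φ−1} · (X − (2n−φ))^{φ−1} · (X² − 2(3n−φ−1)·X + ((3n−φ−1)² − (n² + 2φn − φ² − 2n + 1))). In particular, the eigenvalues of Q are 2(n−1) with multiplicity 2n−φ−1, 2n−φ with multiplicity φ−1, and 3n−φ−1 ± √(n² + 2φn − φ² − 2n + 1), each with multiplicity 1. -/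
open Polynomial

open Classical in
/-- The signless Laplacian matrix Q = D + A of a finite simple graph, as a real matrix. -/
noncomputable def signlessLaplacian (V : Type*) [Fintype V] (G : SimpleGraph V) :
    Matrix V V ℝ :=
  Matrix.of fun i j =>
    if i = j then (G.degree i : ℝ) else if G.Adj i j then 1 else 0

open Finset Matrix

/-- evaluation of the characteristic polynomial -/
lemma charpoly_eval' {V : Type*} [Fintype V] [DecidableEq V] (M : Matrix V V ℝ) (x : ℝ) :
    (M.charpoly).eval x = (x • (1 : Matrix V V ℝ) - M).det := by
  have : (M.charpoly).eval x = (Polynomial.evalRingHom x) (M.charmatrix.det) := rfl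
  rw [this, RingHom.map_det]
  congr 1
  ext i j
  by_cases h : i = j
  · subst h
    simp [Matrix.charmatrix_apply_eq, Matrix.one_apply]
  · simp [Matrix.charmatrix_apply_ne _ _ _ h, Matrix.one_apply_ne h]

/-- divisors of a product of two distinct primes -/
lemma dvd_pq_aux {p q : ℕ} (hp : p.Prime) (hq : q.Prime) (d : ℕ)
    (hd : d ∣ p * q) (hne : d ≠ p * q) : d = 1 ∨ d.Prime := by
  by_cases hpd : p ∣ d
  · obtain ⟨e, rfl⟩ := hpd
    have he : e ∣ q := (mul_dvd_mul_iff_left hp.pos.ne').mp hd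
    rcases (Nat.dvd_prime hq).mp he with rfl | rfl
    · exact Or.inr (by simpa using hp)
    · exact absurd rfl hne
  · have hcop : p.Coprime d := (Nat.Prime.coprime_iff_not_dvd hp).mpr hpd
    have : d ∣ q := (Nat.Coprime.dvd_of_dvd_mul_left hcop.symm) hd
    rcases (Nat.dvd_prime hq).mp this with rfl | rfl
    · exact Or.inl rfl
    · exact Or.inr hq

lemma gcd_one_or_prime_of_dvd {g d : ℕ} (hgd : g ∣ d) (hd : d = 1 ∨ d.Prime) :
    g = 1 ∨ g.Prime := by
  rcases hd with rfl | hd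
  · exact Or.inl (Nat.dvd_one.mp hgd)
  · rcases (Nat.dvd_prime hd).mp hgd with h | h
    · exact Or.inl h
    · exact Or.inr (h ▸ hd)

/-- adjacency in the prime coprime graph of the dihedral group of order 2pq -/
lemma pcGraph_dihedral_adj {p q : ℕ} (hp : p.Prime) (hq : q.Prime)
    [NeZero (p * q)] (x y : DihedralGroup (p * q)) :
    (pcGraph (DihedralGroup (p * q))).Adj x y ↔
      x ≠ y ∧ ¬(orderOf x = p * q ∧ orderOf y = p * q) := by
  have key : ∀ z : DihedralGroup (p * q), orderOf z ∣ p * q ∨ orderOf z = 2 := by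
    intro z
    cases z with
    | r i =>
      left
      rw [DihedralGroup.orderOf_r]
      exact Nat.div_dvd_of_dvd (Nat.gcd_dvd_left _ _)
    | sr i => exact Or.inr (DihedralGroup.orderOf_sr i)
  constructor
  · rintro ⟨hne, h⟩
    refine ⟨hne, ?_⟩
    rintro ⟨hx, hy⟩
    rw [hx, hy, Nat.gcd_self] at h
    rcases h with h | h
    · have h4 : 2 * 2 ≤ p * q := Nat.mul_le_mul hp.two_le hq.two_le
      omega
    · exact Nat.not_prime_mul hp.one_lt.ne' hq.one_lt.ne' h
  · rintro ⟨hne, h⟩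
    refine ⟨hne, ?_⟩
    rcases key x with hx | hx
    · rcases key y with hy | hy
      · by_cases hxn : orderOf x = p * q
        · have hyn : orderOf y ≠ p * q := fun hc => h ⟨hxn, hc⟩
          exact gcd_one_or_prime_of_dvd (Nat.gcd_dvd_right _ _) (dvd_pq_aux hp hq _ hy hyn)
        · exact gcd_one_or_prime_of_dvd (Nat.gcd_dvd_left _ _) (dvd_pq_aux hp hq _ hx hxn)
      · have : Nat.gcd (orderOf x) (orderOf y) ∣ 2 := hy ▸ Nat.gcd_dvd_right _ _
        exact gcd_one_or_prime_of_dvd this (Or.inr Nat.prime_two)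
    · have : Nat.gcd (orderOf x) (orderOf y) ∣ 2 := hx ▸ Nat.gcd_dvd_left _ _
      exact gcd_one_or_prime_of_dvd this (Or.inr Nat.prime_two)

/-- counting elements of order `p*q` in the dihedral group -/
lemma card_orderOf_eq_pq {p q : ℕ} (hp : p.Prime) (hq : q.Prime) (hpq : p ≠ q)
    [NeZero (p * q)] :
    (Finset.univ.filter fun x : DihedralGroup (p * q) => orderOf x = p * q).card
      = (p - 1) * (q - 1) := by
  classical
  have hn0 : p * q ≠ 0 := NeZero.ne _
  have h4 : 2 * 2 ≤ p * q := Nat.mul_le_mul hp.two_le hq.two_le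
  have step1 : (Finset.univ.filter fun x : DihedralGroup (p * q) => orderOf x = p * q).card
      = (Finset.univ.filter fun i : ZMod (p * q) => Nat.gcd (p * q) i.val = 1).card := by
    rw [eq_comm]
    apply Finset.card_bij (fun i _ => DihedralGroup.r i)
    · intro i hi
      simp only [Finset.mem_filter, Finset.mem_univ, true_and] at hi ⊢
      rw [DihedralGroup.orderOf_r, hi, Nat.div_one]
    · intro i _ j _ hij
      simpa using hij
    · intro x hx
      simp only [Finset.mem_filter, Finset.mem_univ, true_and] at hx
      cases x with
      | r i =>
        refine ⟨i, ?_, rfl⟩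
        simp only [Finset.mem_filter, Finset.mem_univ, true_and]
        rw [DihedralGroup.orderOf_r] at hx
        rcases Nat.div_eq_self.mp hx with h | h
        · exact absurd h hn0
        · exact h
      | sr i =>
        rw [DihedralGroup.orderOf_sr] at hx
        omega
  have step2 : (Finset.univ.filter fun i : ZMod (p * q) => Nat.gcd (p * q) i.val = 1).card
      = Nat.totient (p * q) := by
    rw [eq_comm]
    unfold Nat.totient
    apply Finset.card_bij (fun (m : ℕ) _ => (m : ZMod (p * q)))
    · intro m hm
      simp only [Finset.mem_filter, Finset.mem_range] at hm
      simp only [Finset.mem_filter, Finset.mem_univ, true_and]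
      rw [ZMod.val_cast_of_lt hm.1]
      exact hm.2
    · intro m hm m' hm' hmm
      simp only [Finset.mem_filter, Finset.mem_range] at hm hm'
      have := congrArg ZMod.val hmm
      rwa [ZMod.val_cast_of_lt hm.1, ZMod.val_cast_of_lt hm'.1] at this
    · intro i hi
      simp only [Finset.mem_filter, Finset.mem_univ, true_and] at hi
      refine ⟨i.val, ?_, ?_⟩
      · simp only [Finset.mem_filter, Finset.mem_range]
        exact ⟨ZMod.val_lt i, hi⟩
      · simp [ZMod.natCast_val]
  rw [step1, step2, Nat.totient_mul ((Nat.coprime_primes hp hq).mpr hpq),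
    Nat.totient_prime hp, Nat.totient_prime hq]

/-- the characteristic polynomial of the structured matrix -/
lemma aux_charpoly {V : Type*} [Fintype V] [DecidableEq V] (P : V → Prop) [DecidablePred P]
    (a b : ℝ) (m f : ℕ)
    (hm : (Finset.univ.filter fun x => ¬ P x).card = m)
    (hf : (Finset.univ.filter P).card = f)
    (hm1 : 1 ≤ m) (hf1 : 1 ≤ f)
    (Q : Matrix V V ℝ)
    (hQ : ∀ i j, Q i j = if i = j then (if P i then b else a + 1)
        else (if P i ∧ P j then 0 else 1)) :
    Q.charpoly =
      (X - C a) ^ (m - 1) * (X - C b) ^ (f - 1) *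
        ((X - C a) * (X - C b) - C (m : ℝ) * (X - C b + C (f : ℝ))) := by
  classical
  have key : ∀ x : ℝ, x ≠ a → x ≠ b →
      (Q.charpoly).eval x =
        (x - a) ^ (m - 1) * (x - b) ^ (f - 1) *
          ((x - a) * (x - b) - (m : ℝ) * ((x - b) + (f : ℝ))) := by
    intro x hxa hxb
    have ha : x - a ≠ 0 := sub_ne_zero.mpr hxa
    have hb : x - b ≠ 0 := sub_ne_zero.mpr hxb
    rw [charpoly_eval']
    set d : V → ℝ := fun k => if P k then x - b else x - a with hd
    set u : V → ℝ := fun k => if P k then 1 else 0 with hu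
    have hdne : ∀ k, d k ≠ 0 := by
      intro k
      by_cases h : P k <;> simp [hd, h, ha, hb]
    set U : Matrix V (Fin 2) ℝ := Matrix.of (fun k j => if j = 0 then (-1 : ℝ) else u k)
      with hU
    set W : Matrix (Fin 2) V ℝ := Matrix.of (fun j k => if j = 0 then (1 : ℝ) else u k)
      with hW
    set E : Matrix V (Fin 2) ℝ := Matrix.of (fun k j => (d k)⁻¹ * U k j) with hE
    have hDE : Matrix.diagonal d * E = U := by
      ext i j
      rw [Matrix.mul_apply]
      rw [Finset.sum_eq_single i]
      · simp only [hE, Matrix.diagonal_apply_eq, Matrix.of_apply]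
        rw [← mul_assoc, mul_inv_cancel₀ (hdne i), one_mul]
      · intro k _ hk
        simp [Matrix.diagonal_apply_ne' _ hk]
      · intro h
        exact absurd (Finset.mem_univ i) h
    have hUW : ∀ i j, (U * W) i j = -1 + u i * u j := by
      intro i j
      rw [Matrix.mul_apply, Fin.sum_univ_two]
      simp [hU, hW]
    have hN : x • (1 : Matrix V V ℝ) - Q = Matrix.diagonal d * (1 + E * W) := by
      rw [Matrix.mul_add, Matrix.mul_one, ← Matrix.mul_assoc, hDE]
      ext i j
      rw [Matrix.sub_apply, Matrix.smul_apply, Matrix.one_apply, Matrix.add_apply,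
        Matrix.diagonal_apply, hUW, hQ]
      by_cases h : i = j
      · subst h
        by_cases hPi : P i <;> simp [hd, hu, hPi] <;> ring
      · by_cases hPi : P i <;> by_cases hPj : P j <;>
          simp [h, hd, hu, hPi, hPj]
    rw [hN, Matrix.det_mul, Matrix.det_diagonal, Matrix.det_one_add_mul_comm]
    have sum_ite_const : ∀ c1 c2 : ℝ,
        (∑ k : V, if P k then c1 else c2) = f * c1 + m * c2 := by
      intro c1 c2
      rw [Finset.sum_ite, Finset.sum_const, Finset.sum_const, hf, hm]
      simp [nsmul_eq_mul]
    have hprod : (∏ k : V, d k) = (x - b) ^ f * (x - a) ^ m := by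
      rw [hd]
      rw [Finset.prod_ite, Finset.prod_const, Finset.prod_const, hf, hm]
    have hWE : ∀ i j, (W * E) i j = ∑ k : V, W i k * ((d k)⁻¹ * U k j) := by
      intro i j
      rw [Matrix.mul_apply]
      exact Finset.sum_congr rfl fun k _ => by simp [hE]
    have h00 : (W * E) 0 0 = -(f * (x - b)⁻¹ + m * (x - a)⁻¹) := by
      rw [hWE]
      have : ∀ k : V, W 0 k * ((d k)⁻¹ * U k 0)
          = if P k then -(x - b)⁻¹ else -(x - a)⁻¹ := by
        intro k
        by_cases hk : P k <;> simp [hU, hW, hd, hk]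
      rw [Finset.sum_congr rfl fun k _ => this k, sum_ite_const]
      ring
    have h01 : (W * E) 0 1 = f * (x - b)⁻¹ := by
      rw [hWE]
      have : ∀ k : V, W 0 k * ((d k)⁻¹ * U k 1)
          = if P k then (x - b)⁻¹ else 0 := by
        intro k
        by_cases hk : P k <;> simp [hU, hW, hu, hd, hk]
      rw [Finset.sum_congr rfl fun k _ => this k, sum_ite_const]
      ring
    have h10 : (W * E) 1 0 = -(f * (x - b)⁻¹) := by
      rw [hWE]
      have : ∀ k : V, W 1 k * ((d k)⁻¹ * U k 0)
          = if P k then -(x - b)⁻¹ else 0 := by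
        intro k
        by_cases hk : P k <;> simp [hU, hW, hu, hd, hk]
      rw [Finset.sum_congr rfl fun k _ => this k, sum_ite_const]
      ring
    have h11 : (W * E) 1 1 = f * (x - b)⁻¹ := by
      rw [hWE]
      have : ∀ k : V, W 1 k * ((d k)⁻¹ * U k 1)
          = if P k then (x - b)⁻¹ else 0 := by
        intro k
        by_cases hk : P k <;> simp [hU, hW, hu, hd, hk]
      rw [Finset.sum_congr rfl fun k _ => this k, sum_ite_const]
      ring
    rw [Matrix.det_fin_two]
    simp only [Matrix.add_apply, Matrix.one_apply_eq,
      Matrix.one_apply_ne (by decide : (0 : Fin 2) ≠ 1),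
      Matrix.one_apply_ne (by decide : (1 : Fin 2) ≠ 0),
      h00, h01, h10, h11, hprod]
    have hpa : (x - a) ^ m = (x - a) ^ (m - 1) * (x - a) := by
      rw [← pow_succ, Nat.sub_add_cancel hm1]
    have hpb : (x - b) ^ f = (x - b) ^ (f - 1) * (x - b) := by
      rw [← pow_succ, Nat.sub_add_cancel hf1]
    rw [hpa, hpb]
    field_simp
    ring
  -- now conclude the polynomial identity
  set R : ℝ[X] := (X - C a) ^ (m - 1) * (X - C b) ^ (f - 1) *
      ((X - C a) * (X - C b) - C (m : ℝ) * (X - C b + C (f : ℝ))) with hR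
  have hzero : Q.charpoly - R = 0 := by
    apply Polynomial.eq_zero_of_infinite_isRoot
    apply Set.Infinite.mono (s := ({a, b} : Set ℝ)ᶜ)
    · intro x hx
      simp only [Set.mem_compl_iff, Set.mem_insert_iff, Set.mem_singleton_iff, not_or] at hx
      simp only [Set.mem_setOf_eq, Polynomial.IsRoot, Polynomial.eval_sub]
      rw [key x hx.1 hx.2, hR]
      simp only [eval_mul, eval_pow, eval_sub, eval_add, eval_X, eval_C]
      ring
    · exact Set.Finite.infinite_compl ((Set.finite_singleton b).insert a)
  have := sub_eq_zero.mp hzero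
  exact this

/-- The characteristic polynomial of the signless Laplacian of the prime coprime graph
of the dihedral group of order 2pq, for distinct primes p and q, with n = pq and
φ = (p-1)(q-1) the Euler totient of n. -/
theorem pcGraph_dihedral_pq_signlessLaplacian_charpoly (p q : ℕ) (hp : p.Prime)
    (hq : q.Prime) (hpq : p ≠ q) :
    haveI : NeZero (p * q) := ⟨Nat.mul_ne_zero hp.pos.ne' hq.pos.ne'⟩
    let n : ℕ := p * q
    let φ : ℕ := (p - 1) * (q - 1)
    (signlessLaplacian (DihedralGroup n) (pcGraph (DihedralGroup n))).charpoly =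
      (X - C (2 * (n : ℝ) - 2)) ^ (2 * n - φ - 1) *
      (X - C (2 * (n : ℝ) - φ)) ^ (φ - 1) *
      (X ^ 2 - C (2 * (3 * (n : ℝ) - φ - 1)) * X +
        C ((3 * (n : ℝ) - φ - 1) ^ 2 -
          ((n : ℝ) ^ 2 + 2 * φ * n - (φ : ℝ) ^ 2 - 2 * n + 1))) := by
  haveI : NeZero (p * q) := ⟨Nat.mul_ne_zero hp.pos.ne' hq.pos.ne'⟩
  classical
  show (signlessLaplacian (DihedralGroup (p * q)) (pcGraph (DihedralGroup (p * q)))).charpoly =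
      (X - C (2 * ((p * q : ℕ) : ℝ) - 2)) ^ (2 * (p * q) - (p - 1) * (q - 1) - 1) *
      (X - C (2 * ((p * q : ℕ) : ℝ) - ((p - 1) * (q - 1) : ℕ))) ^ ((p - 1) * (q - 1) - 1) *
      (X ^ 2 - C (2 * (3 * ((p * q : ℕ) : ℝ) - ((p - 1) * (q - 1) : ℕ) - 1)) * X +
        C ((3 * ((p * q : ℕ) : ℝ) - ((p - 1) * (q - 1) : ℕ) - 1) ^ 2 -
          (((p * q : ℕ) : ℝ) ^ 2 + 2 * ((p - 1) * (q - 1) : ℕ) * ((p * q : ℕ) : ℝ) -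
            (((p - 1) * (q - 1) : ℕ) : ℝ) ^ 2 - 2 * ((p * q : ℕ) : ℝ) + 1)))
  set P : DihedralGroup (p * q) → Prop := fun x => orderOf x = p * q with hPdef
  have h4 : 2 * 2 ≤ p * q := Nat.mul_le_mul hp.two_le hq.two_le
  have hφle : (p - 1) * (q - 1) ≤ p * q := Nat.mul_le_mul (Nat.sub_le _ _) (Nat.sub_le _ _)
  have hf1 : 1 ≤ (p - 1) * (q - 1) := by
    have h2p := hp.two_le
    have h2q := hq.two_le
    exact Nat.one_le_iff_ne_zero.mpr (Nat.mul_ne_zero (by omega) (by omega))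
  have hf : (Finset.univ.filter P).card = (p - 1) * (q - 1) := card_orderOf_eq_pq hp hq hpq
  have hcardD : Fintype.card (DihedralGroup (p * q)) = 2 * (p * q) := DihedralGroup.card
  have hm : (Finset.univ.filter fun x => ¬ P x).card = 2 * (p * q) - (p - 1) * (q - 1) := by
    have h := Finset.card_filter_add_card_filter_not (s := Finset.univ) (p := P)
    rw [hf, Finset.card_univ, hcardD] at h
    omega
  have hm1 : 1 ≤ 2 * (p * q) - (p - 1) * (q - 1) := by omega
  set a : ℝ := 2 * ((p * q : ℕ) : ℝ) - 2 with hadef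
  set b : ℝ := 2 * ((p * q : ℕ) : ℝ) - ((p - 1) * (q - 1) : ℕ) with hbdef
  have hdeg : ∀ i, (pcGraph (DihedralGroup (p * q))).degree i
      = if P i then 2 * (p * q) - (p - 1) * (q - 1) else 2 * (p * q) - 1 := by
    intro i
    rw [← SimpleGraph.card_neighborSet_eq_degree]
    by_cases hPi : P i
    · rw [if_pos hPi]
      have e : (pcGraph (DihedralGroup (p * q))).neighborSet i ≃ {y // ¬ P y} := by
        apply Equiv.subtypeEquivRight
        intro y
        rw [SimpleGraph.mem_neighborSet, pcGraph_dihedral_adj hp hq]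
        constructor
        · rintro ⟨-, h⟩ hPy
          exact h ⟨hPi, hPy⟩
        · intro hPy
          refine ⟨fun hiy => hPy (hiy ▸ hPi), fun hc => hPy hc.2⟩
      rw [Fintype.card_congr e, Fintype.card_subtype, hm]
    · rw [if_neg hPi]
      have e : (pcGraph (DihedralGroup (p * q))).neighborSet i ≃ {y // ¬ y = i} := by
        apply Equiv.subtypeEquivRight
        intro y
        rw [SimpleGraph.mem_neighborSet, pcGraph_dihedral_adj hp hq]
        constructor
        · rintro ⟨h, -⟩ hyi
          exact h hyi.symm
        · intro hyi
          exact ⟨fun hc => hyi hc.symm, fun hc => hPi hc.1⟩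
      rw [Fintype.card_congr e, Fintype.card_subtype_compl, hcardD,
        Fintype.card_subtype_eq]
  have hQ : ∀ i j, (signlessLaplacian (DihedralGroup (p * q))
        (pcGraph (DihedralGroup (p * q)))) i j
      = if i = j then (if P i then b else a + 1) else (if P i ∧ P j then 0 else 1) := by
    intro i j
    simp only [signlessLaplacian, Matrix.of_apply]
    by_cases h : i = j
    · rw [if_pos h, if_pos h, hdeg i]
      by_cases hPi : P i
      · rw [if_pos hPi, if_pos hPi, hbdef,
          Nat.cast_sub (by omega : (p - 1) * (q - 1) ≤ 2 * (p * q))]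
        push_cast
        ring
      · rw [if_neg hPi, if_neg hPi, hadef,
          Nat.cast_sub (by omega : 1 ≤ 2 * (p * q))]
        push_cast
        ring
    · rw [if_neg h, if_neg h]
      by_cases hPij : P i ∧ P j
      · rw [if_pos hPij, if_neg]
        rw [pcGraph_dihedral_adj hp hq]
        rintro ⟨-, hc⟩
        exact hc hPij
      · rw [if_neg hPij, if_pos]
        exact (pcGraph_dihedral_adj hp hq i j).mpr ⟨h, hPij⟩
  rw [aux_charpoly P a b (2 * (p * q) - (p - 1) * (q - 1)) ((p - 1) * (q - 1))
    hm hf hm1 hf1 _ hQ]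
  have hmcast : ((2 * (p * q) - (p - 1) * (q - 1) : ℕ) : ℝ)
      = 2 * ((p * q : ℕ) : ℝ) - (((p - 1) * (q - 1) : ℕ) : ℝ) := by
    have : (p - 1) * (q - 1) ≤ 2 * (p * q) := by omega
    push_cast [this]
    ring
  congr 1
  rw [hmcast, hadef, hbdef]
  simp only [_root_.map_sub, _root_.map_add, _root_.map_mul, _root_.map_pow,
    _root_.map_one, _root_.map_ofNat]
  ring
end

section
/- Let p be a prime. The characteristic polynomial of the signless Laplacian matrix Q of the prime coprime graph Θ(D_p) of the dihedral group D_p of order 2p, viewed as a real matrix, equals (X − (4p−2)) · (X − (2p−2))^{2p−1}; that is, the eigenvalues of Q are 2(2p−1) with multiplicity 1 and 2p−2 with multiplicity 2p−1. -/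
open Polynomial

section Aux

variable (p : ℕ) [NeZero p]

theorem pcAux_orderOf (hp : p.Prime) (z : DihedralGroup p) :
    orderOf z = 1 ∨ orderOf z = 2 ∨ orderOf z = p := by
  cases z with
  | r i =>
    rw [DihedralGroup.orderOf_r]
    rcases (Nat.dvd_prime hp).1 (Nat.gcd_dvd_left p i.val) with h | h
    · right; right; simp [h]
    · left; rw [h, Nat.div_self hp.pos]
  | sr i => right; left; exact DihedralGroup.orderOf_sr i

theorem pcAux_top (hp : p.Prime) : pcGraph (DihedralGroup p) = ⊤ := by
  have h2 : Nat.Prime 2 := Nat.prime_two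
  have key : ∀ q q' : ℕ, q.Prime → q'.Prime → Nat.gcd q q' = 1 ∨ (Nat.gcd q q').Prime := by
    intro q q' hq hq'
    rcases eq_or_ne q q' with rfl | hne
    · right; simpa using hq
    · left; exact (Nat.coprime_primes hq hq').2 hne
  ext x y
  simp only [pcGraph, SimpleGraph.top_adj]
  constructor
  · exact fun h => h.1
  · intro hxy
    refine ⟨hxy, ?_⟩
    rcases pcAux_orderOf p hp x with ha | ha | ha <;>
      rcases pcAux_orderOf p hp y with hb | hb | hb <;>
      rw [ha, hb] <;>
      first
        | exact key _ _ h2 h2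
        | exact key _ _ h2 hp
        | exact key _ _ hp h2
        | exact key _ _ hp hp
        | (left; simp)

open Classical in
theorem pcAux_mat (hp : p.Prime) :
    signlessLaplacian (DihedralGroup p) (pcGraph (DihedralGroup p)) =
      Matrix.of (fun i j => if i = j then (2 * (p : ℝ) - 1) else 1) := by
  ext i j
  simp only [signlessLaplacian, Matrix.of_apply]
  by_cases h : i = j
  · subst h
    simp only [if_pos rfl]
    rw [pcAux_top p hp]
    have hd : ∀ (h : Fintype ((⊤ : SimpleGraph (DihedralGroup p)).neighborSet i)),
        @SimpleGraph.degree (DihedralGroup p) ⊤ i h = 2 * p - 1 := by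
      intro h
      have := @SimpleGraph.complete_graph_degree (DihedralGroup p) _ (Classical.decEq _) i
      rw [DihedralGroup.card] at this
      convert this using 2
    rw [hd]
    have h1 : 1 ≤ 2 * p := by have := hp.pos; omega
    push_cast [h1]
    ring
  · simp only [if_neg h]
    rw [if_pos]
    rw [pcAux_top p hp]
    exact h

end Aux

/-- Determinant of `a • 1 + col (-1) * row 1` over a field. -/
theorem pcAux_det {V : Type*} [Fintype V] [DecidableEq V] [Nonempty V] {K : Type*} [Field K]
    (a : K) (ha : a ≠ 0) :
    ((a • (1 : Matrix V V K)) + Matrix.replicateCol Unit (fun _ : V => (-1 : K)) *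
        Matrix.replicateRow Unit (fun _ : V => (1 : K))).det
      = (a - (Fintype.card V : K)) * a ^ (Fintype.card V - 1) := by
  have hA : IsUnit ((a • (1 : Matrix V V K)).det) := by
    rw [Matrix.det_smul, Matrix.det_one, mul_one]
    exact (isUnit_iff_ne_zero.2 ha).pow _
  rw [Matrix.det_add_replicateCol_mul_replicateRow hA]
  have hinv : (a • (1 : Matrix V V K))⁻¹ = a⁻¹ • 1 := by
    apply Matrix.inv_eq_right_inv
    rw [Matrix.smul_mul, Matrix.mul_smul, smul_smul, one_mul, mul_inv_cancel₀ ha, one_smul]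
  rw [hinv, Matrix.det_smul, Matrix.det_one, mul_one, Matrix.det_unique]
  simp only [Matrix.add_apply, Matrix.one_apply_eq, Matrix.mul_apply, Matrix.replicateRow_apply,
    Matrix.replicateCol_apply, Matrix.smul_apply, Matrix.one_apply, smul_eq_mul, Finset.univ_unique,
    Finset.sum_singleton]
  simp only [one_mul, mul_ite, mul_one, mul_zero, Finset.sum_ite_eq, Finset.sum_ite_eq', Finset.mem_univ,
    if_pos, Finset.sum_const, Finset.card_univ, nsmul_eq_mul]
  rcases Nat.exists_eq_succ_of_ne_zero (Fintype.card_ne_zero (α := V)) with ⟨m, hm⟩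
  rw [hm]
  simp only [Nat.succ_sub_one]
  have hc : ((Fintype.card V : K)) = (m : K) + 1 := by rw [hm]; push_cast; ring
  field_simp
  simp only [hc, Nat.cast_succ, pow_succ]
  ring

set_option synthInstance.maxHeartbeats 1000000 in
set_option maxHeartbeats 1000000 in
/-- The characteristic polynomial of the signless Laplacian of the prime coprime graph
of the dihedral group of order 2p, for a prime p. -/
theorem pcGraph_dihedral_p_signlessLaplacian_charpoly (p : ℕ) (hp : p.Prime) :
    haveI : NeZero p := ⟨hp.pos.ne'⟩
    (signlessLaplacian (DihedralGroup p) (pcGraph (DihedralGroup p))).charpoly =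
      (X - C (4 * (p : ℝ) - 2)) * (X - C (2 * (p : ℝ) - 2)) ^ (2 * p - 1) := by
  haveI : NeZero p := ⟨hp.pos.ne'⟩
  classical
  have h1 : 1 ≤ 2 * p := by have := hp.pos; omega
  set c : ℝ := 2 * (p : ℝ) - 2 with hc
  have hchar : Matrix.charmatrix (signlessLaplacian (DihedralGroup p) (pcGraph (DihedralGroup p))) =
      (X - C c) • (1 : Matrix (DihedralGroup p) (DihedralGroup p) ℝ[X]) +
        Matrix.replicateCol Unit (fun _ : DihedralGroup p => (-1 : ℝ[X])) *
          Matrix.replicateRow Unit (fun _ : DihedralGroup p => (1 : ℝ[X])) := by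
    rw [pcAux_mat p hp]
    apply Matrix.ext; intro i j
    by_cases h : i = j
    · subst h
      simp only [Matrix.charmatrix_apply_eq, Matrix.of_apply, if_pos rfl, if_true, Matrix.add_apply,
        Matrix.smul_apply, Matrix.one_apply_eq, smul_eq_mul, mul_one, Matrix.mul_apply,
        Matrix.replicateCol_apply, Matrix.replicateRow_apply, Finset.univ_unique, Finset.sum_singleton]
      rw [show (2 * (p:ℝ) - 1) = c + 1 by rw [hc]; ring, map_add, Polynomial.C_1]
      ring
    · simp only [Matrix.charmatrix_apply_ne _ _ _ h, Matrix.of_apply, if_neg h, Matrix.add_apply,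
        Matrix.smul_apply, Matrix.one_apply_ne h, smul_eq_mul, mul_zero, Matrix.mul_apply,
        Matrix.replicateCol_apply, Matrix.replicateRow_apply, Finset.univ_unique, Finset.sum_singleton,
        Polynomial.C_1, zero_add]
      ring
  rw [Matrix.charpoly, hchar]
  apply IsFractionRing.injective ℝ[X] (RatFunc ℝ)
  set φ := algebraMap ℝ[X] (RatFunc ℝ) with hφ
  rw [RingHom.map_det, RingHom.mapMatrix_apply]
  have hmap : (((X - C c) • (1 : Matrix (DihedralGroup p) (DihedralGroup p) ℝ[X]) +
        Matrix.replicateCol Unit (fun _ : DihedralGroup p => (-1 : ℝ[X])) *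
          Matrix.replicateRow Unit (fun _ : DihedralGroup p => (1 : ℝ[X]))).map φ) =
      (φ (X - C c)) • (1 : Matrix (DihedralGroup p) (DihedralGroup p) (RatFunc ℝ)) +
        Matrix.replicateCol Unit (fun _ : DihedralGroup p => (-1 : RatFunc ℝ)) *
          Matrix.replicateRow Unit (fun _ : DihedralGroup p => (1 : RatFunc ℝ)) := by
    ext i j
    by_cases h : i = j
    · subst h
      simp [Matrix.map_apply, Matrix.add_apply, Matrix.smul_apply, Matrix.one_apply_eq,
        Matrix.mul_apply, Matrix.replicateCol_apply, Matrix.replicateRow_apply]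
    · simp [Matrix.map_apply, Matrix.add_apply, Matrix.smul_apply, Matrix.one_apply_ne h,
        Matrix.mul_apply, Matrix.replicateCol_apply, Matrix.replicateRow_apply]
  rw [hmap]
  have ha : φ (X - C c) ≠ 0 := by
    intro h
    have := IsFractionRing.injective ℝ[X] (RatFunc ℝ) (a₁ := X - C c) (a₂ := 0) (by rw [h, map_zero])
    exact X_sub_C_ne_zero c this
  rw [pcAux_det _ ha, DihedralGroup.card]
  rw [map_mul, map_pow]
  congr 1
  have hC : φ (C ((2 * p : ℕ) : ℝ)) = ((2 * p : ℕ) : RatFunc ℝ) := by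
    rw [Polynomial.C_eq_natCast]; exact map_natCast φ _
  have hc4 : (4 * (p : ℝ) - 2) = c + ((2 * p : ℕ) : ℝ) := by rw [hc]; push_cast; ring
  rw [show (X - C (4 * (p : ℝ) - 2)) = (X - C c) - C ((2 * p : ℕ) : ℝ) by
    rw [hc4, map_add]; ring]
  simp only [map_sub, hC]
end
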